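/- Let R be a commutative ring, let J ⊆ I be ideals with I finitely generated, and suppose I^(r+1) = J · I^r for some r ≥ 0. Then every element x ∈ I is integral over J: there exist n ≥ 1 and elements c₁, …, cₙ with cᵢ ∈ J^i such that x^n + c₁ x^(n-1) + ⋯ + c_(n-1) x + cₙ = 0. -/

import Mathlib

theorem integral_over_reduction {R : Type*} [CommRing R] (I J : Ideal R)
    (hJI : J ≤ I) (hfg : I.FG) (r : ℕ) (hred : I ^ (r + 1) = J * I ^ r) :
    ∀ x ∈ I, ∃ n : ℕ, 1 ≤ n ∧ ∃ c : ℕ → R,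
      (∀ i ∈ Finset.Icc 1 n, c i ∈ J ^ i) ∧
      x ^ n + ∑ i ∈ Finset.Icc 1 n, c i * x ^ (n - i) = 0 := by
  intro x hx
  have hMfg : (I ^ r).FG := Submodule.FG.pow hfg r
  haveI : Module.Finite R ↥(I ^ r) := Module.Finite.iff_fg.mpr hMfg
  set f : Module.End R ↥(I ^ r) := algebraMap R (Module.End R ↥(I ^ r)) x with hf
  have hrange : LinearMap.range f ≤ J • (⊤ : Submodule R ↥(I ^ r)) := by
    rintro _ ⟨m, rfl⟩
    rw [Submodule.mem_smul_top_iff]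
    have h0 : (f m : R) = x * (m : R) := rfl
    rw [h0]
    have hmem : x * (m : R) ∈ I ^ (r + 1) := by
      rw [pow_succ']
      exact Ideal.mul_mem_mul hx m.2
    rw [hred] at hmem
    rwa [Ideal.smul_eq_mul]
  obtain ⟨p, hmonic, -, hcoeff, haeval⟩ :=
    LinearMap.exists_monic_and_coeff_mem_pow_and_aeval_eq_zero_of_range_le_smul R f J hrange
  set d := p.natDegree with hd
  have hxr : (x ^ r : R) ∈ I ^ r := Ideal.pow_mem_pow hx r
  have key : p.eval x * x ^ r = 0 := by
    have h1 : Polynomial.aeval f p = algebraMap R (Module.End R ↥(I ^ r)) (p.eval x) := by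
      rw [hf, Polynomial.aeval_algebraMap_apply]
      simp
    have h2 := congrArg (fun g : Module.End R ↥(I ^ r) => g ⟨x ^ r, hxr⟩) haeval
    simp only [h1, LinearMap.zero_apply] at h2
    simpa using congrArg Subtype.val h2
  refine ⟨d + r + 1, Nat.le_add_left 1 _, fun i => if i ≤ d then p.coeff (d - i) else 0, ?_, ?_⟩
  · intro i hi
    by_cases h : i ≤ d
    · simp only [h, if_true]
      have := hcoeff (d - i)
      rwa [Nat.sub_sub_self h] at this
    · simp [h]
  · have hsub : ∑ i ∈ Finset.Icc 1 (d + r + 1),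
        (if i ≤ d then p.coeff (d - i) else 0) * x ^ (d + r + 1 - i)
        = ∑ i ∈ Finset.Icc 1 d, p.coeff (d - i) * x ^ (d + r + 1 - i) := by
      rw [← Finset.sum_subset (Finset.Icc_subset_Icc_right (by omega : d ≤ d + r + 1))]
      · exact Finset.sum_congr rfl fun i hi => by
          simp only [Finset.mem_Icc] at hi; simp [hi.2]
      · intro i hi hni
        simp only [Finset.mem_Icc] at hi hni
        have : ¬ i ≤ d := by omega
        simp [this]
    have hre : ∑ i ∈ Finset.Icc 1 d, p.coeff (d - i) * x ^ (d + r + 1 - i)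
        = ∑ k ∈ Finset.range d, x ^ (r + 1) * (p.coeff k * x ^ k) := by
      apply Finset.sum_nbij' (fun i => d - i) (fun k => d - k)
      · intro i hi
        simp only [Finset.mem_Icc] at hi
        simp only [Finset.mem_range]
        omega
      · intro k hk
        simp only [Finset.mem_range] at hk
        simp only [Finset.mem_Icc]
        omega
      · intro i hi
        simp only [Finset.mem_Icc] at hi
        omega
      · intro k hk
        simp only [Finset.mem_range] at hk
        omega
      · intro i hi
        simp only [Finset.mem_Icc] at hi
        rw [show d + r + 1 - i = (r + 1) + (d - i) by omega, pow_add]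
        ring
    have expand : x ^ (d + r + 1) + ∑ i ∈ Finset.Icc 1 (d + r + 1),
        (if i ≤ d then p.coeff (d - i) else 0) * x ^ (d + r + 1 - i)
        = x ^ (r + 1) * p.eval x := by
      rw [hsub, hre, Polynomial.eval_eq_sum_range, Finset.mul_sum, Finset.sum_range_succ,
        hmonic.coeff_natDegree]
      ring
    have hfin : x ^ (r + 1) * p.eval x = x * (p.eval x * x ^ r) := by ring
    rw [expand, hfin, key, mul_zero]
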